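/- Let C be a class of distributions on a countable domain X and let V_sub be a subtractive adaptive adversary. Let ζ ∈ (0,1), m ∈ ℕ, p ∈ C, and let Q be a meta-distribution over C such that d_TV(V_sub(|Q|^m), V_sub(p^m)) < ζ. Then there exist additive adaptive adversaries V_{add,p^m} and V_{add,|Q|^m} such that d_TV(V_{add,p^m}(|Q|^m), V_{add,|Q|^m}(p^m)) < ζ. Furthermore, if V_sub has fixed constant budget η < 1/2, then both V_{add,p^m} and V_{add,|Q|^m} have fixed constant budgets of no more than η. -/

import Mathlib

open scoped ENNReal NNReal

/-- Total variation distance between two discrete distributions. -/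
noncomputable def tv {X : Type*} (p q : PMF X) : ℝ :=
  (∑' x, |(p x).toReal - (q x).toReal|) / 2

/-- The distribution of an i.i.d. sample of size `m` from `p`, viewed as a multiset. -/
noncomputable def iid {X : Type*} (p : PMF X) : ℕ → PMF (Multiset X)
  | 0 => PMF.pure 0
  | n + 1 => (iid p n).bind fun s => p.map fun x => x ::ₘ s

/-- `|Q|^m` : first draw `q ∼ Q`, then an i.i.d. sample `S ∼ q^m`. -/
noncomputable def metaSample {X : Type*} (Q : PMF (PMF X)) (m : ℕ) : PMF (Multiset X) :=
  Q.bind fun q => iid q m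

/-- An adaptive adversary: a randomized map from samples (finite multisets) to samples. -/
abbrev Adversary (X : Type*) := Multiset X → PMF (Multiset X)

/-- `V(P)`: the distribution of `V S` for `S ∼ P` (including internal randomness). -/
noncomputable def advPush {X : Type*} (V : Adversary X) (P : PMF (Multiset X)) :
    PMF (Multiset X) := P.bind V

/-- An additive adversary only adds points: `S ⊆ V(S)` almost surely. -/
def IsAdditive {X : Type*} (V : Adversary X) : Prop :=
  ∀ S T, T ∈ (V S).support → S ≤ T

/-- A subtractive adversary only removes points: `V(S) ⊆ S` almost surely. -/
def IsSubtractive {X : Type*} (V : Adversary X) : Prop :=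
  ∀ S T, T ∈ (V S).support → T ≤ S

/-- Fixed constant budget `η`: `|V(S)|` depends only on `|S|` (via `c`), and for every `m`,
`η m − 1 < m·budget(V,m) ≤ η m` where `m·budget(V,m) = ||V(S)| − |S||`. -/
def FixedBudget {X : Type*} (V : Adversary X) (η : ℝ) : Prop :=
  ∃ c : ℕ → ℕ, (∀ S T, T ∈ (V S).support → Multiset.card T = c (Multiset.card S)) ∧
    ∀ m : ℕ, η * m - 1 < |(c m : ℝ) - m| ∧ |(c m : ℝ) - m| ≤ η * m

/-- Fixed constant budget `η` for an additive adversary (`m·budget(V,m) = |V(S)| − |S|`). -/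
def FixedBudgetAdd {X : Type*} (V : Adversary X) (η : ℝ) : Prop :=
  ∃ c : ℕ → ℕ, (∀ S T, T ∈ (V S).support → Multiset.card T = c (Multiset.card S)) ∧
    ∀ m : ℕ, η * m - 1 < (c m : ℝ) - m ∧ (c m : ℝ) - m ≤ η * m

/-- Fixed constant budget `η` for a subtractive adversary (`m·budget(V,m) = |S| − |V(S)|`). -/
def FixedBudgetSub {X : Type*} (V : Adversary X) (η : ℝ) : Prop :=
  ∃ c : ℕ → ℕ, (∀ S T, T ∈ (V S).support → Multiset.card T = c (Multiset.card S)) ∧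
    ∀ m : ℕ, η * m - 1 < (m : ℝ) - c m ∧ (m : ℝ) - c m ≤ η * m

/-- Probability of an event under a discrete distribution. -/
noncomputable def probEvent {β : Type*} (P : PMF β) (E : Set β) : ℝ≥0∞ :=
  P.toOuterMeasure E

/-- `A` with sample complexity `mc` learns the class `C` against adversary `V`,
up to error `bound + ε` with confidence `1 − δ` once `m ≥ mc ε δ`. -/
def RobustLearnerFor {X : Type*} (C : Set (PMF X)) (A : Multiset X → PMF X)
    (mc : ℝ → ℝ → ℕ) (V : Adversary X) (bound : ℝ) : Prop :=
  ∀ p ∈ C, ∀ ε δ : ℝ, 0 < ε → ε < 1 → 0 < δ → δ < 1 →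
    ∀ m : ℕ, mc ε δ ≤ m →
      1 - ENNReal.ofReal δ ≤
        probEvent ((iid p m).bind V) {T | tv (A T) p ≤ bound + ε}

/-- `C` is adaptively α-robustly learnable w.r.t. the single adversary `V` with budget `η`. -/
def RobustlyLearnableWrt {X : Type*} (C : Set (PMF X)) (α : ℝ)
    (V : Adversary X) (η : ℝ) : Prop :=
  ∃ A mc, RobustLearnerFor C A mc V (α * η)

/-- `V` (with budget `η`) is a universal α-adversary for `C`. -/
def UniversalAdversary {X : Type*} (C : Set (PMF X)) (α : ℝ)
    (V : Adversary X) (η : ℝ) : Prop :=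
  ¬ RobustlyLearnableWrt C α V η

/-- `C` is adaptively α-robustly learnable w.r.t. a class `𝒱` of adversaries
(each given with its budget). -/
def RobustlyLearnableWrtClass {X : Type*} (C : Set (PMF X)) (α : ℝ)
    (𝒱 : Set (Adversary X × ℝ)) : Prop :=
  ∃ A mc, ∀ Vη ∈ 𝒱, RobustLearnerFor C A mc Vη.1 (α * Vη.2)

/-- `C` is adaptively additively α-robustly learnable: one learner works simultaneously
against all additive adaptive adversaries with fixed constant budgets. -/
def AdditivelyRobustlyLearnable {X : Type*} (C : Set (PMF X)) (α : ℝ) : Prop :=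
  ∃ A mc, ∀ V : Adversary X, ∀ η : ℝ, 0 < η → η < 1 →
    IsAdditive V → FixedBudgetAdd V η → RobustLearnerFor C A mc V (α * η)

/-- `C` is adaptively subtractively α-robustly learnable. -/
def SubtractivelyRobustlyLearnable {X : Type*} (C : Set (PMF X)) (α : ℝ) : Prop :=
  ∃ A mc, ∀ V : Adversary X, ∀ η : ℝ, 0 < η → η < 1 →
    IsSubtractive V → FixedBudgetSub V η → RobustLearnerFor C A mc V (α * η)

/-- The pair `(V1, V2)` successfully `(γ,ζ)`-confuses `C`-generated samples of size `m`. -/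
def ConfusesPair {X : Type*} (C : Set (PMF X)) (V1 V2 : Adversary X)
    (γ ζ : ℝ) (m : ℕ) : Prop :=
  ∃ p ∈ C, ∃ Q : PMF (PMF X), Q.support ⊆ C ∧
    (∀ q ∈ Q.support, γ < tv p q) ∧
    tv (advPush V1 (metaSample Q m)) (advPush V2 (iid p m)) < ζ

/-- A single adversary `V` successfully `(γ,ζ)`-confuses `C`-generated samples of size `m`. -/
def Confuses {X : Type*} (C : Set (PMF X)) (V : Adversary X) (γ ζ : ℝ) (m : ℕ) : Prop :=
  ConfusesPair C V V γ ζ m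

/-- `p` is the distribution `p_{i,j,k} = (1 − 1/j)·δ_{(0,0)} + (1/j − 1/k)·U_{B_i×{2j+1}}
 + (1/k)·δ_{(i,2j+2)}` on `ℕ × ℕ`. -/
def IsPijk (B : ℕ → Finset ℕ) (i j k : ℕ) (p : PMF (ℕ × ℕ)) : Prop :=
  ∀ x : ℕ × ℕ,
    p x = (1 - ((j : ℝ≥0∞))⁻¹) * (if x = (0, 0) then 1 else 0)
      + (((j : ℝ≥0∞))⁻¹ - ((k : ℝ≥0∞))⁻¹) *
          (if x.1 ∈ B i ∧ x.2 = 2 * j + 1 then (((B i).card : ℝ≥0∞))⁻¹ else 0)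
      + ((k : ℝ≥0∞))⁻¹ * (if x = (i, 2 * j + 2) then 1 else 0)

/-- The class `C_g = {p_{i,j,g(j)} : i, j ∈ ℕ}` (for the meaningful parameters). -/
def Cg (B : ℕ → Finset ℕ) (g : ℕ → ℕ) : Set (PMF (ℕ × ℕ)) :=
  {p | ∃ i j : ℕ, 1 ≤ j ∧ j < g j ∧ (B i).Nonempty ∧ IsPijk B i j (g j) p}

/-- `g` is superlinear: `g(n)/n → ∞`. -/
def Superlinear (g : ℕ → ℕ) : Prop :=
  Filter.Tendsto (fun n => (g n : ℝ) / n) Filter.atTop Filter.atTop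


section StmtSevenAux

lemma pmf_bind_congr' {α β : Type*} (P : PMF α) (f g : α → PMF β)
    (h : ∀ a ∈ P.support, f a = g a) : P.bind f = P.bind g :=
  PMF.ext fun x => tsum_congr fun a => by
    by_cases ha : P a = 0
    · simp [ha]
    · rw [h a (by simpa [PMF.mem_support_iff] using ha)]

/-- twice the total variation distance, in `ℝ≥0∞`. -/
noncomputable def etv {α : Type*} (p q : PMF α) : ℝ≥0∞ := ∑' x, ((p x - q x) + (q x - p x))

lemma etv_le_two {α : Type*} (p q : PMF α) : etv p q ≤ 2 := by
  have : ∀ x, (p x - q x) + (q x - p x) ≤ p x + q x := fun x =>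
    add_le_add tsub_le_self tsub_le_self
  calc etv p q ≤ ∑' x, (p x + q x) := ENNReal.tsum_le_tsum this
    _ = 2 := by rw [ENNReal.tsum_add, p.tsum_coe, q.tsum_coe]; norm_num

lemma etv_ne_top {α : Type*} (p q : PMF α) : etv p q ≠ ⊤ :=
  ne_top_of_le_ne_top (by norm_num) (etv_le_two p q)

lemma tv_eq_etv' {α : Type*} (p q : PMF α) :
    (∑' x, |(p x).toReal - (q x).toReal|) = (etv p q).toReal := by
  rw [etv, ENNReal.tsum_toReal_eq (fun x => by
    have h1 : p x ≠ ⊤ := ne_top_of_le_ne_top ENNReal.one_ne_top (p.coe_le_one x)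
    have h2 : q x ≠ ⊤ := ne_top_of_le_ne_top ENNReal.one_ne_top (q.coe_le_one x)
    exact ENNReal.add_ne_top.2 ⟨ne_top_of_le_ne_top h1 tsub_le_self,
      ne_top_of_le_ne_top h2 tsub_le_self⟩)]
  refine tsum_congr fun x => ?_
  have h1 : p x ≠ ⊤ := ne_top_of_le_ne_top ENNReal.one_ne_top (p.coe_le_one x)
  have h2 : q x ≠ ⊤ := ne_top_of_le_ne_top ENNReal.one_ne_top (q.coe_le_one x)
  rcases le_total (p x) (q x) with h | h
  · have hpq : p x - q x = 0 := tsub_eq_zero_of_le h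
    rw [hpq, zero_add, abs_of_nonpos (by
      have := ENNReal.toReal_mono h2 h
      linarith), ENNReal.toReal_sub_of_le h h2]
    ring
  · have hqp : q x - p x = 0 := tsub_eq_zero_of_le h
    rw [hqp, add_zero, abs_of_nonneg (by
      have := ENNReal.toReal_mono h1 h
      linarith), ENNReal.toReal_sub_of_le h h1]

lemma etv_bind_le {α β : Type*} (P P' : PMF α) (L : α → PMF β) :
    etv (P.bind L) (P'.bind L) ≤ etv P P' := by
  have key : ∀ (A B : PMF α) (U : β),
      (A.bind L) U - (B.bind L) U ≤ ∑' T, (A T - B T) * L T U := by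
    intro A B U
    rw [PMF.bind_apply, PMF.bind_apply, tsub_le_iff_right]
    calc ∑' T, A T * L T U ≤ ∑' T, ((A T - B T) * L T U + B T * L T U) := by
          refine ENNReal.tsum_le_tsum fun T => ?_
          rw [← add_mul]
          exact mul_le_mul_left (le_tsub_add) _
      _ = (∑' T, (A T - B T) * L T U) + ∑' T, B T * L T U := ENNReal.tsum_add
  calc etv (P.bind L) (P'.bind L)
      ≤ ∑' U, ((∑' T, (P T - P' T) * L T U) + ∑' T, (P' T - P T) * L T U) :=
        ENNReal.tsum_le_tsum fun U => add_le_add (key P P' U) (key P' P U)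
    _ = (∑' U, ∑' T, (P T - P' T) * L T U) + ∑' U, ∑' T, (P' T - P T) * L T U :=
        ENNReal.tsum_add
    _ = (∑' T, ∑' U, (P T - P' T) * L T U) + ∑' T, ∑' U, (P' T - P T) * L T U := by
        rw [ENNReal.tsum_comm (f := fun U T => (P T - P' T) * L T U),
          ENNReal.tsum_comm (f := fun U T => (P' T - P T) * L T U)]
    _ = (∑' T, (P T - P' T)) + ∑' T, (P' T - P T) := by
        simp_rw [ENNReal.tsum_mul_left, PMF.tsum_coe, mul_one]
    _ = etv P P' := ENNReal.tsum_add.symm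

lemma tv_bind_le {α β : Type*} (P P' : PMF α) (L : α → PMF β) :
    tv (P.bind L) (P'.bind L) ≤ tv P P' := by
  rw [tv, tv, tv_eq_etv', tv_eq_etv']
  have := ENNReal.toReal_mono (etv_ne_top P P') (etv_bind_le P P' L)
  linarith

/-- conditional kernel of second coordinate given first, with fallback. -/
noncomputable def condK' {α β : Type*} (J : PMF (α × β)) (fb : α → PMF β) (T : α) : PMF β :=
  if h : (∑' R, J (T, R)) = 0 then fb T else
    id (α := PMF β) ⟨fun R => J (T, R) / ∑' R', J (T, R'), by
      have hle : (∑' R', J (T, R')) ≤ 1 := by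
        rw [← J.tsum_coe]
        exact ENNReal.tsum_comp_le_tsum_of_injective
          (f := fun R : β => (T, R)) (fun a b hab => by simpa using hab) J
      have htop : (∑' R', J (T, R')) ≠ ⊤ := ne_top_of_le_ne_top ENNReal.one_ne_top hle
      have : (∑' R, J (T, R) / ∑' R', J (T, R')) = 1 := by
        simp_rw [div_eq_mul_inv, ENNReal.tsum_mul_right]
        rw [← div_eq_mul_inv, ENNReal.div_self h htop]
      exact this ▸ ENNReal.summable.hasSum⟩

lemma condK'_apply_of_ne {α β : Type*} (J : PMF (α × β)) (fb : α → PMF β) (T : α)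
    (h : ¬ (∑' R, J (T, R)) = 0) (R : β) :
    condK' J fb T R = J (T, R) / ∑' R', J (T, R') := by
  simp only [condK', dif_neg h]; rfl

lemma margin_mul_condK' {α β : Type*} (J : PMF (α × β)) (fb : α → PMF β) (T : α) (R : β) :
    (∑' R', J (T, R')) * condK' J fb T R = J (T, R) := by
  by_cases h : (∑' R', J (T, R')) = 0
  · have hJ : J (T, R) = 0 := by
      have := ENNReal.le_tsum (f := fun R' => J (T, R')) R
      simpa [h] using this
    simp [h, hJ]
  · rw [condK'_apply_of_ne J fb T h R]
    have hle : (∑' R', J (T, R')) ≤ 1 := by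
      rw [← J.tsum_coe]
      exact ENNReal.tsum_comp_le_tsum_of_injective
        (f := fun R : β => (T, R)) (fun a b hab => by simpa using hab) J
    have htop : (∑' R', J (T, R')) ≠ ⊤ := ne_top_of_le_ne_top ENNReal.one_ne_top hle
    rw [ENNReal.mul_div_cancel h htop]

section Decomp

variable {X : Type*} [DecidableEq X] (Vs : Adversary X)

/-- joint distribution of (kept, removed) parts. -/
noncomputable def jointOf (P : PMF (Multiset X)) : PMF (Multiset X × Multiset X) :=
  P.bind fun S => (Vs S).map fun T => (T, S - T)

lemma margin_jointOf (P : PMF (Multiset X)) (T : Multiset X) :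
    ∑' R, jointOf Vs P (T, R) = (P.bind Vs) T := by
  simp only [jointOf, PMF.bind_apply, PMF.map_apply]
  rw [ENNReal.tsum_comm]
  refine tsum_congr fun S => ?_
  rw [ENNReal.tsum_mul_left]
  congr 1
  rw [ENNReal.tsum_comm]
  refine (tsum_eq_single T fun b hb => ?_).trans ?_
  · exact ENNReal.tsum_eq_zero.mpr fun a => if_neg fun h => hb (congrArg Prod.fst h).symm
  · refine (tsum_eq_single (S - T) fun a ha => ?_).trans ?_
    · exact if_neg fun h => ha (congrArg Prod.snd h)
    · exact if_pos rfl

/-- The conditional distribution of the removed part given the kept part. -/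
noncomputable def condOf (P : PMF (Multiset X)) (fb : Multiset X → PMF (Multiset X)) :
    Multiset X → PMF (Multiset X) := condK' (jointOf Vs P) fb

lemma bind_condOf (P : PMF (Multiset X)) (fb : Multiset X → PMF (Multiset X))
    (F : Multiset X → Multiset X → PMF (Multiset X)) :
    (P.bind Vs).bind (fun T => (condOf Vs P fb T).bind (F T))
      = (jointOf Vs P).bind (fun TR => F TR.1 TR.2) := by
  apply PMF.ext; intro U
  rw [PMF.bind_apply, PMF.bind_apply, ENNReal.tsum_prod']
  refine tsum_congr fun T => ?_
  rw [← margin_jointOf Vs P T, PMF.bind_apply, ← ENNReal.tsum_mul_left]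
  refine tsum_congr fun RA => ?_
  rw [condOf] at *
  rw [← mul_assoc, margin_mul_condK']

lemma jointOf_bind (hVs : IsSubtractive Vs)
    (P : PMF (Multiset X)) (W : Multiset X → PMF (Multiset X)) :
    (jointOf Vs P).bind (fun TR => (W TR.1).map fun R => TR.1 + TR.2 + R)
      = P.bind (fun S => (Vs S).bind fun T => (W T).map fun R => S + R) := by
  rw [jointOf, PMF.bind_bind]
  refine congrArg _ (funext fun S => ?_)
  rw [PMF.bind_map]
  refine PMF.ext fun x => tsum_congr fun T => ?_
  by_cases hT : Vs S T = 0
  · simp [hT]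
  · have hle : T ≤ S := hVs S T (by simpa [PMF.mem_support_iff] using hT)
    have : T + (S - T) = S := add_tsub_cancel_of_le hle
    simp only [Function.comp]
    rw [this]

/-- The full decomposition. -/
lemma decompose (hVs : IsSubtractive Vs)
    (P : PMF (Multiset X)) (fb : Multiset X → PMF (Multiset X))
    (W : Multiset X → PMF (Multiset X)) :
    P.bind (fun S => (Vs S).bind fun T => (W T).map fun R => S + R)
      = (P.bind Vs).bind
          (fun T => (condOf Vs P fb T).bind fun RA => (W T).map fun R => T + RA + R) := by
  rw [bind_condOf, jointOf_bind Vs hVs]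

lemma condOf_card (hVs : IsSubtractive Vs) (P : PMF (Multiset X))
    (m : ℕ) (hP : ∀ S ∈ P.support, Multiset.card S = m)
    (fb : Multiset X → PMF (Multiset X))
    (hfb : ∀ T R, R ∈ (fb T).support → Multiset.card R = m - Multiset.card T)
    (T R : Multiset X) (hR : R ∈ (condOf Vs P fb T).support) :
    Multiset.card R = m - Multiset.card T := by
  rw [condOf, condK'] at hR
  by_cases h : (∑' R', jointOf Vs P (T, R')) = 0
  · rw [dif_pos h] at hR
    exact hfb T R hR
  · rw [dif_neg h] at hR
    have hJ : jointOf Vs P (T, R) ≠ 0 := by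
      intro h0
      apply hR
      show jointOf Vs P (T, R) / _ = 0
      rw [h0, ENNReal.zero_div]
    have hmem : (T, R) ∈ (jointOf Vs P).support := hJ
    rw [jointOf, PMF.mem_support_bind_iff] at hmem
    obtain ⟨S, hS, hTR⟩ := hmem
    rw [PMF.mem_support_map_iff] at hTR
    obtain ⟨T', hT', hEq⟩ := hTR
    have hT : T' = T := congrArg Prod.fst hEq
    have hRS : S - T' = R := congrArg Prod.snd hEq
    have hle : T' ≤ S := hVs S T' hT'
    rw [← hRS, Multiset.card_sub hle, hP S hS, hT]

end Decomp

lemma card_iid {X : Type*} (p : PMF X) :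
    ∀ n : ℕ, ∀ S ∈ (iid p n).support, Multiset.card S = n := by
  intro n
  induction n with
  | zero => intro S hS; simp [iid, PMF.mem_support_iff] at hS; simp [hS]
  | succ k ih =>
      intro S hS
      rw [iid, PMF.mem_support_bind_iff] at hS
      obtain ⟨s, hs, hS⟩ := hS
      rw [PMF.mem_support_map_iff] at hS
      obtain ⟨x, _, hx⟩ := hS
      rw [← hx, Multiset.card_cons, ih s hs]

lemma card_metaSample {X : Type*} (Q : PMF (PMF X)) (m : ℕ) :
    ∀ S ∈ (metaSample Q m).support, Multiset.card S = m := by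
  intro S hS
  rw [metaSample, PMF.mem_support_bind_iff] at hS
  obtain ⟨q, _, hS⟩ := hS
  exact card_iid q m S hS

end StmtSevenAux

/-- If a subtractive adversary `V_sub` makes `|Q|^m` and `p^m`
ζ-indistinguishable, then there are additive adversaries `V_{add,p^m}` (applied to `|Q|^m`)
and `V_{add,|Q|^m}` (applied to `p^m`) achieving the same; moreover if `V_sub` has fixed
constant budget `η < 1/2`, both additive adversaries have fixed constant budgets `≤ η`. -/
theorem stmt7 {X : Type*} [Countable X] (C : Set (PMF X)) (Vs : Adversary X)
    (hVs : IsSubtractive Vs) (ζ : ℝ) (hζ : ζ ∈ Set.Ioo (0 : ℝ) 1) (m : ℕ)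
    (p : PMF X) (hp : p ∈ C) (Q : PMF (PMF X)) (hQ : Q.support ⊆ C)
    (hclose : tv (advPush Vs (metaSample Q m)) (advPush Vs (iid p m)) < ζ) :
    ∃ VaddP VaddQ : Adversary X, IsAdditive VaddP ∧ IsAdditive VaddQ ∧
      tv (advPush VaddP (metaSample Q m)) (advPush VaddQ (iid p m)) < ζ ∧
      ∀ η : ℝ, 0 < η → η < 1 / 2 → FixedBudgetSub Vs η →
        ∃ η1 η2 : ℝ, 0 ≤ η1 ∧ η1 ≤ η ∧ 0 ≤ η2 ∧ η2 ≤ η ∧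
          FixedBudgetAdd VaddP η1 ∧ FixedBudgetAdd VaddQ η2 := by
  classical
  obtain ⟨x₀, -⟩ := p.support_nonempty
  set A := metaSample Q m with hAdef
  set B := iid p m with hBdef
  set fb : Multiset X → PMF (Multiset X) :=
    fun T => PMF.pure (Multiset.replicate (m - Multiset.card T) x₀) with hfbdef
  have hfb : ∀ T R, R ∈ (fb T).support → Multiset.card R = m - Multiset.card T := by
    intro T R hR
    rw [hfbdef] at hR
    simp only [PMF.support_pure, Set.mem_singleton_iff] at hR
    rw [hR, Multiset.card_replicate]
  set KB := condOf Vs B fb with hKBdef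
  set KA := condOf Vs A fb with hKAdef
  set VaddP : Adversary X := fun S =>
    if Multiset.card S = m then (Vs S).bind (fun T => (KB T).map fun R => S + R)
    else (Vs S).bind
      (fun T => PMF.pure (S + Multiset.replicate (Multiset.card S - Multiset.card T) x₀))
    with hVPdef
  set VaddQ : Adversary X := fun S =>
    if Multiset.card S = m then (Vs S).bind (fun T => (KA T).map fun R => S + R)
    else (Vs S).bind
      (fun T => PMF.pure (S + Multiset.replicate (Multiset.card S - Multiset.card T) x₀))
    with hVQdef
  have hAm : ∀ S ∈ A.support, Multiset.card S = m := card_metaSample Q m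
  have hBm : ∀ S ∈ B.support, Multiset.card S = m := card_iid p m
  -- additivity of the two constructed adversaries
  have hadd : ∀ (V : Adversary X) (K : Multiset X → PMF (Multiset X)),
      (V = fun S => if Multiset.card S = m then (Vs S).bind (fun T => (K T).map fun R => S + R)
        else (Vs S).bind (fun T => PMF.pure
          (S + Multiset.replicate (Multiset.card S - Multiset.card T) x₀))) →
      IsAdditive V := by
    intro V K hVdef S T' hT'
    rw [hVdef] at hT'
    simp only [] at hT'
    by_cases hcard : Multiset.card S = m
    · rw [if_pos hcard, PMF.mem_support_bind_iff] at hT'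
      obtain ⟨T, _, hT'⟩ := hT'
      rw [PMF.mem_support_map_iff] at hT'
      obtain ⟨R, _, hEq⟩ := hT'
      rw [← hEq]
      exact le_add_right le_rfl
    · rw [if_neg hcard, PMF.mem_support_bind_iff] at hT'
      obtain ⟨T, _, hT'⟩ := hT'
      simp only [PMF.support_pure, Set.mem_singleton_iff] at hT'
      rw [hT']
      exact le_add_right le_rfl
  -- the common kernel
  set L : Multiset X → PMF (Multiset X) :=
    fun T => (KA T).bind fun RA => (KB T).map fun R => T + RA + R with hLdef
  have h1 : advPush VaddP A = (A.bind Vs).bind L := by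
    show A.bind VaddP = _
    rw [pmf_bind_congr' A VaddP
      (fun S => (Vs S).bind fun T => (KB T).map fun R => S + R)
      (fun S hS => by rw [hVPdef]; exact if_pos (hAm S hS))]
    rw [decompose Vs hVs A fb KB, ← hKAdef]
  have h2 : advPush VaddQ B = (B.bind Vs).bind L := by
    show B.bind VaddQ = _
    rw [pmf_bind_congr' B VaddQ
      (fun S => (Vs S).bind fun T => (KA T).map fun R => S + R)
      (fun S hS => by rw [hVQdef]; exact if_pos (hBm S hS))]
    rw [decompose Vs hVs B fb KA, ← hKBdef]
    refine congrArg _ (funext fun T => ?_)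
    show ((KB T).bind fun RB => (KA T).bind fun RA => PMF.pure (T + RB + RA))
      = (KA T).bind fun RA => (KB T).bind fun RB => PMF.pure (T + RA + RB)
    rw [PMF.bind_comm]
    exact congrArg _ (funext fun RA => congrArg _ (funext fun RB =>
      congrArg PMF.pure (add_right_comm T RB RA)))
  refine ⟨VaddP, VaddQ, hadd VaddP KB hVPdef, hadd VaddQ KA hVQdef, ?_, ?_⟩
  · calc tv (advPush VaddP A) (advPush VaddQ B)
        = tv ((A.bind Vs).bind L) ((B.bind Vs).bind L) := by rw [h1, h2]
      _ ≤ tv (A.bind Vs) (B.bind Vs) := tv_bind_le _ _ _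
      _ < ζ := hclose
  · rintro η hη0 hη ⟨c, hc, hcb⟩
    have hcle : ∀ n, c n ≤ n := by
      intro n
      have h1 := (hcb n).1
      have hnn : (0:ℝ) ≤ η * n := mul_nonneg hη0.le (Nat.cast_nonneg n)
      have : (c n : ℝ) < n + 1 := by linarith
      exact Nat.lt_succ_iff.mp (by exact_mod_cast this)
    have hineq : ∀ n : ℕ,
        η * n - 1 < ((n + (n - c n) : ℕ) : ℝ) - n ∧ ((n + (n - c n) : ℕ) : ℝ) - n ≤ η * n := by
      intro n
      have hcast : ((n + (n - c n) : ℕ) : ℝ) - n = (n : ℝ) - c n := by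
        push_cast [hcle n]; ring
      rw [hcast]
      exact hcb n
    have hbudget : ∀ (V : Adversary X) (P : PMF (Multiset X)),
        (∀ S ∈ P.support, Multiset.card S = m) →
        (V = fun S => if Multiset.card S = m
          then (Vs S).bind (fun T => ((condOf Vs P fb T)).map fun R => S + R)
          else (Vs S).bind (fun T => PMF.pure
            (S + Multiset.replicate (Multiset.card S - Multiset.card T) x₀))) →
        FixedBudgetAdd V η := by
      intro V P hPm hVdef
      refine ⟨fun n => n + (n - c n), ?_, hineq⟩
      intro S T' hT'
      rw [hVdef] at hT'
      simp only [] at hT'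
      by_cases hcard : Multiset.card S = m
      · rw [if_pos hcard, PMF.mem_support_bind_iff] at hT'
        obtain ⟨T, hT, hT'⟩ := hT'
        rw [PMF.mem_support_map_iff] at hT'
        obtain ⟨R, hR, hEq⟩ := hT'
        have hcT : Multiset.card T = c m := by rw [hc S T hT, hcard]
        have hcR : Multiset.card R = m - Multiset.card T :=
          condOf_card Vs hVs P m hPm fb hfb T R hR
        rw [← hEq, Multiset.card_add, hcR, hcT, hcard]
      · rw [if_neg hcard, PMF.mem_support_bind_iff] at hT'
        obtain ⟨T, hT, hT'⟩ := hT'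
        simp only [PMF.support_pure, Set.mem_singleton_iff] at hT'
        rw [hT', Multiset.card_add, Multiset.card_replicate, hc S T hT]
    refine ⟨η, η, hη0.le, le_rfl, hη0.le, le_rfl,
      hbudget VaddP B hBm (by rw [hVPdef, hKBdef]),
      hbudget VaddQ A hAm (by rw [hVQdef, hKAdef])⟩
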